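/- arXiv:2604.23806 — 4 statements merged into one kernel-verified Lean document; each statement's English description precedes it below -/
import Mathlib

section
/- Let E : ℝᵖ × ℝⁿ → ℝ be C², and for each parameter θ suppose x⋆(θ) is a point with ∇ₓE(θ, x⋆(θ)) = 0 and x⋆ differentiable in θ. Define F(θ) = C(x⋆(θ)) for a C¹ function C : ℝⁿ → ℝ, and for β ∈ ℝ let x⋆^β(θ) be a differentiable family of critical points of x ↦ E(θ,x) + β·C(x) with x⋆^0 = x⋆. Then the EqProp estimator g_β(θ) = (1/β)·[∇_θE(θ, x⋆^β(θ)) − ∇_θE(θ, x⋆^0(θ))] converges to ∇_θ F(θ) as β → 0⁺, provided β ↦ x⋆^β(θ) is C¹ at β = 0. -/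
open Filter Set

set_option maxHeartbeats 2000000 in
/-- EqProp identity: the one-sided estimator converges to the gradient of the
loss `F θ = C (x⋆ θ)` as the nudge strength `β → 0⁺`. -/
theorem stmt_0 {p n : ℕ}
    (E : EuclideanSpace ℝ (Fin p) → EuclideanSpace ℝ (Fin n) → ℝ)
    (C : EuclideanSpace ℝ (Fin n) → ℝ)
    (hE : ContDiff ℝ 2 (fun q : EuclideanSpace ℝ (Fin p) × EuclideanSpace ℝ (Fin n) => E q.1 q.2))
    (hC : ContDiff ℝ 1 C)
    (xs : ℝ → EuclideanSpace ℝ (Fin p) → EuclideanSpace ℝ (Fin n))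
    (hcrit : ∀ β θ, gradient (fun x => E θ x + β * C x) (xs β θ) = 0)
    (hdiffθ : ∀ β, Differentiable ℝ (xs β))
    (θ : EuclideanSpace ℝ (Fin p))
    (hdiffβ : ContDiffAt ℝ 1 (fun β => xs β θ) 0) :
    Tendsto
      (fun β : ℝ =>
        β⁻¹ • (gradient (fun t => E t (xs β θ)) θ - gradient (fun t => E t (xs 0 θ)) θ))
      (nhdsWithin 0 (Set.Ioi 0))
      (nhds (gradient (fun t => C (xs 0 t)) θ)) := by
  set f : (EuclideanSpace ℝ (Fin p)) × (EuclideanSpace ℝ (Fin n)) → ℝ := fun q => E q.1 q.2 with hfdef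
  have hf1 : Differentiable ℝ f := hE.differentiable (by norm_num)
  have hfd : ContDiff ℝ 1 (fderiv ℝ f) := hE.fderiv_right (by norm_num)
  have hC1 : Differentiable ℝ C := hC.differentiable (by norm_num)
  set f' : (EuclideanSpace ℝ (Fin p)) × (EuclideanSpace ℝ (Fin n)) → ((EuclideanSpace ℝ (Fin p)) × (EuclideanSpace ℝ (Fin n))) →L[ℝ] ℝ := fderiv ℝ f with hf'def
  set z : (EuclideanSpace ℝ (Fin p)) × (EuclideanSpace ℝ (Fin n)) := (θ, xs 0 θ) with hzdef
  set f'' : ((EuclideanSpace ℝ (Fin p)) × (EuclideanSpace ℝ (Fin n))) →L[ℝ] ((EuclideanSpace ℝ (Fin p)) × (EuclideanSpace ℝ (Fin n))) →L[ℝ] ℝ := fderiv ℝ f' z with hf''def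
  set inl : (EuclideanSpace ℝ (Fin p)) →L[ℝ] (EuclideanSpace ℝ (Fin p)) × (EuclideanSpace ℝ (Fin n)) := ContinuousLinearMap.inl ℝ (EuclideanSpace ℝ (Fin p)) (EuclideanSpace ℝ (Fin n)) with hinldef
  set inr : (EuclideanSpace ℝ (Fin n)) →L[ℝ] (EuclideanSpace ℝ (Fin p)) × (EuclideanSpace ℝ (Fin n)) := ContinuousLinearMap.inr ℝ (EuclideanSpace ℝ (Fin p)) (EuclideanSpace ℝ (Fin n)) with hinrdef
  -- partial derivative in the parameter as a composition
  have hpartL : ∀ (t : (EuclideanSpace ℝ (Fin p))) (x : (EuclideanSpace ℝ (Fin n))),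
      fderiv ℝ (fun t' => E t' x) t = (f' (t, x)).comp inl := by
    intro t x
    have h : HasFDerivAt (fun t' : (EuclideanSpace ℝ (Fin p)) => f (t', x)) ((f' (t, x)).comp inl) t :=
      by have := (hf1 (t, x)).hasFDerivAt.comp t (hasFDerivAt_prodMk_left (𝕜 := ℝ) t x); exact this
    exact h.fderiv
  -- criticality in fderiv form
  have hzero : ∀ (β : ℝ) (t : (EuclideanSpace ℝ (Fin p))),
      (f' (t, xs β t)).comp inr + β • fderiv ℝ C (xs β t) = 0 := by
    intro β t
    have h0 : fderiv ℝ (fun x => E t x + β * C x) (xs β t) = 0 := by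
      have h := congrArg (InnerProductSpace.toDual ℝ (EuclideanSpace ℝ (Fin n))) (hcrit β t)
      unfold gradient at h
      simpa using h
    have hEx : HasFDerivAt (fun x' : (EuclideanSpace ℝ (Fin n)) => f (t, x')) ((f' (t, xs β t)).comp inr) (xs β t) :=
      (hf1 (t, xs β t)).hasFDerivAt.comp (xs β t) (hasFDerivAt_prodMk_right t (xs β t))
    have hsum : HasFDerivAt (fun x => E t x + β * C x)
        ((f' (t, xs β t)).comp inr + β • fderiv ℝ C (xs β t)) (xs β t) :=
      hEx.add ((hC1 (xs β t)).hasFDerivAt.const_mul β)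
    rw [← hsum.fderiv]; exact h0
  -- derivative of β ↦ xs β θ at 0
  have hdx : DifferentiableAt ℝ (fun β => xs β θ) 0 := hdiffβ.differentiableAt (by norm_num)
  set x' : (EuclideanSpace ℝ (Fin n)) := deriv (fun β => xs β θ) 0 with hx'def
  have hx' : HasDerivAt (fun β => xs β θ) x' 0 := hdx.hasDerivAt
  have hg : HasDerivAt (fun β : ℝ => ((θ, xs β θ) : (EuclideanSpace ℝ (Fin p)) × (EuclideanSpace ℝ (Fin n)))) ((0 : (EuclideanSpace ℝ (Fin p))), x') 0 :=
    (hasDerivAt_const (0:ℝ) θ).prodMk hx'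
  have hΦ : HasDerivAt (fun β => f' (θ, xs β θ)) (f'' ((0 : (EuclideanSpace ℝ (Fin p))), x')) 0 :=
    ((hfd.differentiable (by norm_num)) z).hasFDerivAt.comp_hasDerivAt 0 hg
  -- composition-with-inclusion CLMs
  set Rr : (((EuclideanSpace ℝ (Fin p)) × (EuclideanSpace ℝ (Fin n))) →L[ℝ] ℝ) →L[ℝ] ((EuclideanSpace ℝ (Fin n)) →L[ℝ] ℝ) :=
    (ContinuousLinearMap.compL ℝ (EuclideanSpace ℝ (Fin n)) ((EuclideanSpace ℝ (Fin p)) × (EuclideanSpace ℝ (Fin n))) ℝ).flip inr with hRrdef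
  set Rl : (((EuclideanSpace ℝ (Fin p)) × (EuclideanSpace ℝ (Fin n))) →L[ℝ] ℝ) →L[ℝ] ((EuclideanSpace ℝ (Fin p)) →L[ℝ] ℝ) :=
    (ContinuousLinearMap.compL ℝ (EuclideanSpace ℝ (Fin p)) ((EuclideanSpace ℝ (Fin p)) × (EuclideanSpace ℝ (Fin n))) ℝ).flip inl with hRldef
  have hRr_apply : ∀ T : ((EuclideanSpace ℝ (Fin p)) × (EuclideanSpace ℝ (Fin n))) →L[ℝ] ℝ, Rr T = T.comp inr := fun T => rfl
  have hRl_apply : ∀ T : ((EuclideanSpace ℝ (Fin p)) × (EuclideanSpace ℝ (Fin n))) →L[ℝ] ℝ, Rl T = T.comp inl := fun T => rfl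
  -- (*) : β-differentiated criticality at β = 0
  have hstar : (f'' ((0 : (EuclideanSpace ℝ (Fin p))), x')).comp inr = -(fderiv ℝ C (xs 0 θ)) := by
    have hA1 : HasDerivAt (fun β => (f' (θ, xs β θ)).comp inr)
        ((f'' ((0 : (EuclideanSpace ℝ (Fin p))), x')).comp inr) 0 := by
      have h := Rr.hasFDerivAt.comp_hasDerivAt 0 hΦ
      exact h
    have heqfun : (fun β => (f' (θ, xs β θ)).comp inr)
        = fun β => -(β • fderiv ℝ C (xs β θ)) := by
      funext β
      exact eq_neg_of_add_eq_zero_left (hzero β θ)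
    have hucont : ContinuousAt (fun β => fderiv ℝ C (xs β θ)) 0 :=
      (hC.continuous_fderiv (by norm_num)).continuousAt.comp hdiffβ.continuousAt
    have hA2 : HasDerivAt (fun β : ℝ => -(β • fderiv ℝ C (xs β θ)))
        (-(fderiv ℝ C (xs 0 θ))) 0 := by
      apply HasDerivAt.neg
      rw [hasDerivAt_iff_tendsto_slope]
      have hev : (fun β : ℝ => fderiv ℝ C (xs β θ)) =ᶠ[nhdsWithin 0 {(0:ℝ)}ᶜ]
          slope (fun β : ℝ => β • fderiv ℝ C (xs β θ)) 0 := by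
        filter_upwards [self_mem_nhdsWithin] with β hβ
        have hβ' : β ≠ 0 := hβ
        simp [slope, hβ', smul_smul, inv_mul_cancel₀]
      exact Tendsto.congr' hev (hucont.tendsto.mono_left nhdsWithin_le_nhds)
    rw [hA1.unique (heqfun ▸ hA2)]
  -- (**) : θ-differentiated criticality at β = 0
  set D : (EuclideanSpace ℝ (Fin p)) →L[ℝ] (EuclideanSpace ℝ (Fin n)) := fderiv ℝ (xs 0) θ with hDdef
  have hstar2 : ∀ v : (EuclideanSpace ℝ (Fin p)), (f'' (v, D v)).comp inr = 0 := by
    intro v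
    have hgt : HasFDerivAt (fun t : (EuclideanSpace ℝ (Fin p)) => ((t, xs 0 t) : (EuclideanSpace ℝ (Fin p)) × (EuclideanSpace ℝ (Fin n))))
        ((ContinuousLinearMap.id ℝ (EuclideanSpace ℝ (Fin p))).prod D) θ :=
      (hasFDerivAt_id θ).prodMk ((hdiffθ 0) θ).hasFDerivAt
    have h1 : HasFDerivAt (fun t : (EuclideanSpace ℝ (Fin p)) => f' (t, xs 0 t))
        (f''.comp ((ContinuousLinearMap.id ℝ (EuclideanSpace ℝ (Fin p))).prod D)) θ :=
      ((hfd.differentiable (by norm_num)) z).hasFDerivAt.comp θ hgt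
    have hK : HasFDerivAt (fun t : (EuclideanSpace ℝ (Fin p)) => (f' (t, xs 0 t)).comp inr)
        (Rr.comp (f''.comp ((ContinuousLinearMap.id ℝ (EuclideanSpace ℝ (Fin p))).prod D))) θ :=
      Rr.hasFDerivAt.comp θ h1
    have hK0 : (fun t : (EuclideanSpace ℝ (Fin p)) => (f' (t, xs 0 t)).comp inr) = fun _ => (0 : (EuclideanSpace ℝ (Fin n)) →L[ℝ] ℝ) := by
      funext t
      have h := hzero 0 t
      simpa using h
    have hzeroderiv : HasFDerivAt (fun t : (EuclideanSpace ℝ (Fin p)) => (f' (t, xs 0 t)).comp inr)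
        (0 : (EuclideanSpace ℝ (Fin p)) →L[ℝ] ((EuclideanSpace ℝ (Fin n)) →L[ℝ] ℝ)) θ := by
      rw [hK0]; exact hasFDerivAt_const _ _
    have h := hK.unique hzeroderiv
    calc (f'' (v, D v)).comp inr
        = (Rr.comp (f''.comp ((ContinuousLinearMap.id ℝ (EuclideanSpace ℝ (Fin p))).prod D))) v := rfl
      _ = (0 : (EuclideanSpace ℝ (Fin p)) →L[ℝ] ((EuclideanSpace ℝ (Fin n)) →L[ℝ] ℝ)) v := by rw [h]
      _ = 0 := rfl
  -- symmetry of the second derivative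
  have hsymm : ∀ a b : (EuclideanSpace ℝ (Fin p)) × (EuclideanSpace ℝ (Fin n)), f'' a b = f'' b a := fun a b =>
    second_derivative_symmetric (fun y => (hf1 y).hasFDerivAt)
      ((hfd.differentiable (by norm_num)) z).hasFDerivAt a b
  -- the key identity for the limit derivative
  have hDcomp : fderiv ℝ (fun t => C (xs 0 t)) θ = (fderiv ℝ C (xs 0 θ)).comp D :=
    ((hC1 (xs 0 θ)).hasFDerivAt.comp θ ((hdiffθ 0) θ).hasFDerivAt).fderiv
  have hkey : (f'' ((0 : (EuclideanSpace ℝ (Fin p))), x')).comp inl = fderiv ℝ (fun t => C (xs 0 t)) θ := by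
    rw [hDcomp]
    ext v
    have h1 : f'' ((0 : (EuclideanSpace ℝ (Fin p))), x') (v, (0 : (EuclideanSpace ℝ (Fin n)))) = f'' (v, (0 : (EuclideanSpace ℝ (Fin n)))) ((0 : (EuclideanSpace ℝ (Fin p))), x') :=
      hsymm _ _
    have hadd : ((v, (0 : (EuclideanSpace ℝ (Fin n)))) : (EuclideanSpace ℝ (Fin p)) × (EuclideanSpace ℝ (Fin n))) + ((0 : (EuclideanSpace ℝ (Fin p))), D v) = (v, D v) := by
      simp
    have h2 : f'' (v, (0 : (EuclideanSpace ℝ (Fin n)))) ((0 : (EuclideanSpace ℝ (Fin p))), x') + f'' ((0 : (EuclideanSpace ℝ (Fin p))), D v) ((0 : (EuclideanSpace ℝ (Fin p))), x') = 0 := by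
      have := congrFun (congrArg (fun (T : (EuclideanSpace ℝ (Fin n)) →L[ℝ] ℝ) => ⇑T) (hstar2 v)) x'
      simp only [ContinuousLinearMap.comp_apply, ContinuousLinearMap.zero_apply] at this
      have hinr : inr x' = ((0 : (EuclideanSpace ℝ (Fin p))), x') := rfl
      rw [hinr] at this
      rw [← this, ← hadd, map_add]
      simp
    have h3 : f'' ((0 : (EuclideanSpace ℝ (Fin p))), D v) ((0 : (EuclideanSpace ℝ (Fin p))), x') = f'' ((0 : (EuclideanSpace ℝ (Fin p))), x') ((0 : (EuclideanSpace ℝ (Fin p))), D v) :=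
      hsymm _ _
    have h4 : f'' ((0 : (EuclideanSpace ℝ (Fin p))), x') ((0 : (EuclideanSpace ℝ (Fin p))), D v) = -(fderiv ℝ C (xs 0 θ) (D v)) := by
      have := congrFun (congrArg (fun (T : (EuclideanSpace ℝ (Fin n)) →L[ℝ] ℝ) => ⇑T) hstar) (D v)
      simpa [hinrdef] using this
    have : f'' ((0 : (EuclideanSpace ℝ (Fin p))), x') (v, (0 : (EuclideanSpace ℝ (Fin n)))) = fderiv ℝ C (xs 0 θ) (D v) := by
      rw [h1]
      have := h2
      rw [h3, h4] at this
      linarith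
    simpa [hinldef] using this
  -- the gradient curve and its derivative
  set T : (((EuclideanSpace ℝ (Fin p)) →L[ℝ] ℝ)) →L[ℝ] (EuclideanSpace ℝ (Fin p)) :=
    (InnerProductSpace.toDual ℝ (EuclideanSpace ℝ (Fin p))).symm.toLinearIsometry.toContinuousLinearMap with hTdef
  have hT_apply : ∀ X : (EuclideanSpace ℝ (Fin p)) →L[ℝ] ℝ, T X = (InnerProductSpace.toDual ℝ (EuclideanSpace ℝ (Fin p))).symm X :=
    fun X => rfl
  have hGdef : ∀ β, gradient (fun t => E t (xs β θ)) θ = T ((f' (θ, xs β θ)).comp inl) := by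
    intro β
    rw [hT_apply]
    unfold gradient
    rw [hpartL θ (xs β θ)]
  have hG : HasDerivAt (fun β => gradient (fun t => E t (xs β θ)) θ)
      (gradient (fun t => C (xs 0 t)) θ) 0 := by
    have hinner : HasDerivAt (fun β => Rl (f' (θ, xs β θ))) (Rl (f'' ((0 : (EuclideanSpace ℝ (Fin p))), x'))) 0 :=
      Rl.hasFDerivAt.comp_hasDerivAt 0 hΦ
    have houter : HasDerivAt (fun β => T (Rl (f' (θ, xs β θ))))
        (T (Rl (f'' ((0 : (EuclideanSpace ℝ (Fin p))), x')))) 0 :=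
      T.hasFDerivAt.comp_hasDerivAt 0 hinner
    have hfun : (fun β => gradient (fun t => E t (xs β θ)) θ)
        = fun β => T (Rl (f' (θ, xs β θ))) := by
      funext β; rw [hGdef β, hRl_apply]
    have hval : T (Rl (f'' ((0 : (EuclideanSpace ℝ (Fin p))), x'))) = gradient (fun t => C (xs 0 t)) θ := by
      rw [hRl_apply, hkey, hT_apply]
      rfl
    rw [hfun, ← hval]
    exact houter
  -- conclude via the slope characterization
  have hslope := hasDerivAt_iff_tendsto_slope.1 hG
  have hmono : nhdsWithin (0:ℝ) (Set.Ioi 0) ≤ nhdsWithin 0 {(0:ℝ)}ᶜ :=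
    nhdsWithin_mono 0 (fun x hx => ne_of_gt hx)
  refine Tendsto.congr' ?_ (hslope.mono_left hmono)
  filter_upwards [self_mem_nhdsWithin] with β hβ
  simp [slope, sub_zero]
end

section
/- Let E : ℝⁿ → ℝ be λ⋆-strongly convex and C³, with third derivative tensor bounded in operator norm by T̄, and let C : ℝⁿ → ℝ be a C² function with ‖∇C‖ ≤ G and bounded second derivative. Let x_β denote the unique minimizer of E + β·C. Then the map β ↦ x_β is differentiable at β = 0 with derivative v = −H⁻¹∇C(x₀), where H = ∇²E(x₀), and ‖x_β − x₀ − β·v‖ ≤ K·β² for some constant K depending only on λ⋆, T̄, G, and the bound on ∇²C. -/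
open Set

open InnerProductSpace

noncomputable section Aux

variable {X : Type*} [NormedAddCommGroup X] [InnerProductSpace ℝ X] [CompleteSpace X]

local notation "⟪" x ", " y "⟫" => @inner ℝ _ _ x y

/-- The inverse of `toDual` as a continuous linear map. -/
noncomputable def dualCLM (X : Type*) [NormedAddCommGroup X] [InnerProductSpace ℝ X]
    [CompleteSpace X] : StrongDual ℝ X →L[ℝ] X :=
  LinearMap.mkContinuous
    { toFun := fun φ => (toDual ℝ X).symm φ
      map_add' := fun a b => map_add _ a b
      map_smul' := fun r φ => by
        simp [LinearIsometryEquiv.map_smulₛₗ] }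
    1 (fun φ => by simp)

@[simp] lemma dualCLM_norm (φ : StrongDual ℝ X) : ‖dualCLM X φ‖ = ‖φ‖ := by
  simp [dualCLM]

@[simp] lemma dualCLM_inner (φ : StrongDual ℝ X) (u : X) :
    ⟪dualCLM X φ, u⟫ = φ u := by
  simp [dualCLM, toDual_symm_apply]

lemma gradient_eq_dualCLM (f : X → ℝ) (x : X) :
    gradient f x = dualCLM X (fderiv ℝ f x) := rfl

lemma dualCLM_injective : Function.Injective (dualCLM X) := by
  intro a b h
  have := congrArg (toDual ℝ X) h
  simpa [dualCLM] using this

/-- Gradient inequality for a convex differentiable function. -/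
lemma convexOn_fderiv_le {ψ : X → ℝ} (hψ : ConvexOn ℝ univ ψ) {x y : X} {ψ' : X →L[ℝ] ℝ}
    (hd : HasFDerivAt ψ ψ' x) : ψ' (y - x) ≤ ψ y - ψ x := by
  have hq : ConvexOn ℝ univ (ψ ∘ (AffineMap.lineMap x y : ℝ →ᵃ[ℝ] X)) := by
    simpa using hψ.comp_affineMap (AffineMap.lineMap x y : ℝ →ᵃ[ℝ] X)
  have hlin : ∀ t : ℝ, (AffineMap.lineMap x y : ℝ →ᵃ[ℝ] X) t = t • (y - x) + x := by
    intro t; simp [AffineMap.lineMap_apply]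
  have hinner : HasDerivAt (fun t : ℝ => t • (y - x) + x) (y - x) 0 := by
    simpa using ((hasDerivAt_id (0 : ℝ)).smul_const (y - x)).add_const x
  have hd0 : HasDerivAt (ψ ∘ (AffineMap.lineMap x y : ℝ →ᵃ[ℝ] X)) (ψ' (y - x)) 0 := by
    have : HasDerivAt (fun t : ℝ => ψ (t • (y - x) + x)) (ψ' (y - x)) 0 := by
      have hd' : HasFDerivAt ψ ψ' ((0:ℝ) • (y - x) + x) := by simpa using hd
      simpa [Function.comp_def] using hd'.comp_hasDerivAt 0 hinner
    refine this.congr_of_eventuallyEq ?_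
    filter_upwards with t using by simp [hlin]
  have := hq.le_slope_of_hasDerivAt (mem_univ (0 : ℝ)) (mem_univ (1 : ℝ)) one_pos hd0
  rw [slope_def_field] at this
  simpa [hlin] using this

/-- Strong monotonicity of the differential of a strongly convex function. -/
lemma strong_mono {E : X → ℝ} {lam : ℝ} (hconv : StrongConvexOn univ lam E)
    (hE1 : Differentiable ℝ E) (x y : X) :
    lam * ‖x - y‖ ^ 2 ≤ fderiv ℝ E x (x - y) - fderiv ℝ E y (x - y) := by
  have hψ : ConvexOn ℝ univ fun z => E z - lam / 2 * ‖z‖ ^ 2 :=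
    strongConvexOn_iff_convex.mp hconv
  have hder : ∀ z : X, HasFDerivAt (fun z => E z - lam / 2 * ‖z‖ ^ 2)
      (fderiv ℝ E z - (lam / 2) • (2 • (innerSL ℝ z))) z := fun z =>
    (hE1 z).hasFDerivAt.sub ((hasStrictFDerivAt_norm_sq z).hasFDerivAt.const_mul (lam / 2))
  have h1 := convexOn_fderiv_le hψ (hder x) (y := y)
  have h2 := convexOn_fderiv_le hψ (hder y) (y := x)
  have e1 : (fderiv ℝ E x - (lam / 2) • (2 • (innerSL ℝ x))) (y - x)
      = fderiv ℝ E x (y - x) - lam * ⟪x, y - x⟫ := by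
    simp [ContinuousLinearMap.smul_apply]; ring
  have e2 : (fderiv ℝ E y - (lam / 2) • (2 • (innerSL ℝ y))) (x - y)
      = fderiv ℝ E y (x - y) - lam * ⟪y, x - y⟫ := by
    simp [ContinuousLinearMap.smul_apply]; ring
  rw [e1] at h1; rw [e2] at h2
  have hip : ⟪x, y - x⟫ + ⟪y, x - y⟫ = -‖x - y‖ ^ 2 := by
    rw [← real_inner_self_eq_norm_sq]
    simp [inner_sub_left, inner_sub_right, real_inner_comm x y]
    rw [norm_sub_sq_real]; ring
  have hmap : fderiv ℝ E x (y - x) = -(fderiv ℝ E x (x - y)) := by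
    rw [← map_neg]; congr 1; abel
  rw [hmap] at h1
  have hip' : lam * ⟪x, y - x⟫ + lam * ⟪y, x - y⟫ = -(lam * ‖x - y‖ ^ 2) := by
    rw [← mul_add, hip]; ring
  linarith [h1, h2, hip']


/-- Mean value inequality on the whole space. -/
lemma lip_of_fderiv_bound {Y : Type*} [NormedAddCommGroup Y] [NormedSpace ℝ Y]
    {h : X → Y} (hd : Differentiable ℝ h) {L : ℝ} (hb : ∀ z, ‖fderiv ℝ h z‖ ≤ L) (a b : X) :
    ‖h a - h b‖ ≤ L * ‖a - b‖ :=
  Convex.norm_image_sub_le_of_norm_fderiv_le (fun z _ => hd z) (fun z _ => hb z)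
    convex_univ (mem_univ b) (mem_univ a)

/-- Taylor expansion with quadratic remainder from a Lipschitz derivative. -/
lemma taylor_of_fderiv_lip {Y : Type*} [NormedAddCommGroup Y] [NormedSpace ℝ Y]
    {h : X → Y} (hd : Differentiable ℝ h) {L : ℝ} (hL : 0 ≤ L)
    (hlip : ∀ a b, ‖fderiv ℝ h a - fderiv ℝ h b‖ ≤ L * ‖a - b‖) (x y : X) :
    ‖h y - h x - fderiv ℝ h x (y - x)‖ ≤ L * ‖y - x‖ ^ 2 := by
  have hx : x ∈ Metric.closedBall x ‖y - x‖ := Metric.mem_closedBall_self (norm_nonneg _)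
  have hy : y ∈ Metric.closedBall x ‖y - x‖ := by
    simp [Metric.mem_closedBall, dist_eq_norm]
  have key := Convex.norm_image_sub_le_of_norm_fderiv_le' (f := h) (φ := fderiv ℝ h x) (C := L * ‖y - x‖)
    (fun z _ => hd z)
    (fun z hz => by
      refine le_trans (hlip z x) ?_
      have hz' : ‖z - x‖ ≤ ‖y - x‖ := by
        simpa [dist_eq_norm] using (Metric.mem_closedBall.mp hz)
      exact mul_le_mul_of_nonneg_left hz' hL)
    (convex_closedBall x ‖y - x‖) hx hy
  calc ‖h y - h x - fderiv ℝ h x (y - x)‖ ≤ L * ‖y - x‖ * ‖y - x‖ := key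
    _ = L * ‖y - x‖ ^ 2 := by ring

end Aux

open scoped RealInnerProductSpace


lemma stmt2_arith {lam Tbar Bbar G : ℝ} (hlam : 0 < lam) (hT0 : 0 ≤ Tbar) (hB0 : 0 ≤ Bbar)
    (hG0 : 0 ≤ G) : ∀ a b c : ℝ, 0 ≤ a → 0 ≤ b → 0 ≤ c →
    lam * a ≤ c * (Bbar * b) + Tbar * b ^ 2 → lam * b ≤ G * c →
    a * lam ^ 3 ≤ (Bbar * G * lam + Tbar * G ^ 2) * (c * c) := by
  intro a b c ha hb hc h1 h2
  have h1' : lam ^ 2 * (lam * a) ≤ lam ^ 2 * (c * (Bbar * b) + Tbar * b ^ 2) :=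
    mul_le_mul_of_nonneg_left h1 (by positivity)
  have h2a : Bbar * lam * ((lam * b) * c) ≤ Bbar * lam * ((G * c) * c) :=
    mul_le_mul_of_nonneg_left (mul_le_mul_of_nonneg_right h2 hc) (by positivity)
  have h2b : Tbar * ((lam * b) * (lam * b)) ≤ Tbar * ((G * c) * (G * c)) :=
    mul_le_mul_of_nonneg_left
      (mul_le_mul h2 h2 (by positivity) (by positivity)) hT0
  nlinarith [h1', h2a, h2b]

set_option maxHeartbeats 2000000


/-- Second-order expansion of the nudged equilibrium: `β ↦ x_β` is
differentiable at `β = 0` with derivative `v = -H⁻¹ ∇C(x₀)` (expressed by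
`H v = -∇C(x₀)`) and a quadratic remainder bound with constant depending only
on `λ⋆`, `T̄`, `G`, and the bound on `∇²C`. -/
theorem stmt_2 {n : ℕ}
    (E C : EuclideanSpace ℝ (Fin n) → ℝ)
    (lam : ℝ) (hlam : 0 < lam)
    (hconv : StrongConvexOn Set.univ lam E)
    (hE : ContDiff ℝ 3 E)
    (Tbar : ℝ) (hT : ∀ x, ‖iteratedFDeriv ℝ 3 E x‖ ≤ Tbar)
    (hC : ContDiff ℝ 2 C)
    (G : ℝ) (hG : ∀ x, ‖gradient C x‖ ≤ G)
    (Bbar : ℝ) (hB : ∀ x, ‖iteratedFDeriv ℝ 2 C x‖ ≤ Bbar)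
    (xβ : ℝ → EuclideanSpace ℝ (Fin n))
    (hmin : ∀ β, IsMinOn (fun x => E x + β * C x) Set.univ (xβ β)) :
    ∃ v : EuclideanSpace ℝ (Fin n),
      fderiv ℝ (gradient E) (xβ 0) v = -gradient C (xβ 0) ∧
      HasDerivAt xβ v 0 ∧
      ∃ K : ℝ → ℝ → ℝ → ℝ → ℝ,
        ∀ β : ℝ, ‖xβ β - xβ 0 - β • v‖ ≤ K lam Tbar G Bbar * β ^ 2 := by
  classical
  have hE1 : Differentiable ℝ E := hE.differentiable (by norm_num)
  have hC1 : Differentiable ℝ C := hC.differentiable (by norm_num)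
  set f' : EuclideanSpace ℝ (Fin n) → (EuclideanSpace ℝ (Fin n) →L[ℝ] ℝ) := fderiv ℝ E
    with hf'def
  set f'' := fderiv ℝ f' with hf''def
  set g' : EuclideanSpace ℝ (Fin n) → (EuclideanSpace ℝ (Fin n) →L[ℝ] ℝ) := fderiv ℝ C
    with hg'def
  have hf'cd : ContDiff ℝ 2 f' := hE.fderiv_right (by norm_num)
  have hf'diff : Differentiable ℝ f' := hf'cd.differentiable (by norm_num)
  have hf''cd : ContDiff ℝ 1 f'' := hf'cd.fderiv_right (by norm_num)
  have hf''diff : Differentiable ℝ f'' := hf''cd.differentiable (by norm_num)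
  have hg'cd : ContDiff ℝ 1 g' := hC.fderiv_right (by norm_num)
  have hg'diff : Differentiable ℝ g' := hg'cd.differentiable (by norm_num)
  have hT0 : 0 ≤ Tbar := le_trans (norm_nonneg _) (hT 0)
  have hB0 : 0 ≤ Bbar := le_trans (norm_nonneg _) (hB 0)
  have hG0 : 0 ≤ G := le_trans (norm_nonneg _) (hG 0)
  letI : NormedAddCommGroup (EuclideanSpace ℝ (Fin n) →L[ℝ] EuclideanSpace ℝ (Fin n) →L[ℝ] ℝ) :=
    inferInstance
  letI : NormedSpace ℝ (EuclideanSpace ℝ (Fin n) →L[ℝ] EuclideanSpace ℝ (Fin n) →L[ℝ] ℝ) :=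
    inferInstance
  -- third derivative bound
  have hf''db : ∀ z, ‖fderiv ℝ f'' z‖ ≤ Tbar := by
    intro z
    have e1 : ‖fderiv ℝ f'' z‖ = ‖iteratedFDeriv ℝ 3 E z‖ := by
      rw [← norm_iteratedFDeriv_zero (𝕜 := ℝ) (f := fderiv ℝ f''), norm_iteratedFDeriv_fderiv,
        hf''def, norm_iteratedFDeriv_fderiv, hf'def, norm_iteratedFDeriv_fderiv]
    rw [e1]; exact hT z
  have hg'db : ∀ z, ‖fderiv ℝ g' z‖ ≤ Bbar := by
    intro z
    have e1 : ‖fderiv ℝ g' z‖ = ‖iteratedFDeriv ℝ 2 C z‖ := by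
      rw [← norm_iteratedFDeriv_zero (𝕜 := ℝ) (f := fderiv ℝ g'), norm_iteratedFDeriv_fderiv,
        hg'def, norm_iteratedFDeriv_fderiv]
    rw [e1]; exact hB z
  have hf''lip : ∀ a b, ‖f'' a - f'' b‖ ≤ Tbar * ‖a - b‖ := fun a b =>
    lip_of_fderiv_bound hf''diff hf''db a b
  have hg'lip : ∀ a b, ‖g' a - g' b‖ ≤ Bbar * ‖a - b‖ := fun a b =>
    lip_of_fderiv_bound hg'diff hg'db a b
  have hTaylor : ∀ x y, ‖f' y - f' x - f'' x (y - x)‖ ≤ Tbar * ‖y - x‖ ^ 2 := fun x y =>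
    taylor_of_fderiv_lip hf'diff hT0 (fun a b => hf''lip a b) x y
  -- critical points
  have hcrit : ∀ β, f' (xβ β) = -(β • g' (xβ β)) := by
    intro β
    have hfd : HasFDerivAt (fun x => E x + β * C x) (f' (xβ β) + β • g' (xβ β)) (xβ β) :=
      ((hE1 _).hasFDerivAt).add (((hC1 _).hasFDerivAt).const_mul β)
    have h0 := ((hmin β).isLocalMin Filter.univ_mem).hasFDerivAt_eq_zero hfd
    exact eq_neg_of_add_eq_zero_left h0
  have hcrit0 : f' (xβ 0) = 0 := by simpa using hcrit 0
  set x0 := xβ 0 with hx0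
  have hg'b : ∀ z, ‖g' z‖ ≤ G := by
    intro z
    have e : ‖gradient C z‖ = ‖g' z‖ := by
      rw [gradient_eq_dualCLM]; exact dualCLM_norm _
    rw [← e]; exact hG z
  have hmono : ∀ a b, lam * ‖a - b‖ ^ 2 ≤ f' a (a - b) - f' b (a - b) := fun a b =>
    strong_mono hconv hE1 a b
  -- coercivity of the Hessian at x0
  have hcoerc : ∀ u : EuclideanSpace ℝ (Fin n), lam * ‖u‖ ^ 2 ≤ f'' x0 u u := by
    intro u
    have key : ∀ t : ℝ, 0 < t → lam * ‖u‖ ^ 2 ≤ f'' x0 u u + Tbar * ‖u‖ ^ 3 * t := by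
      intro t ht
      have h1 := hmono (x0 + t • u) x0
      rw [add_sub_cancel_left] at h1
      have h2 := hTaylor x0 (x0 + t • u)
      rw [add_sub_cancel_left] at h2
      have h3 : (f' (x0 + t • u) - f' x0 - f'' x0 (t • u)) (t • u) ≤
          (Tbar * ‖t • u‖ ^ 2) * ‖t • u‖ := by
        calc (f' (x0 + t • u) - f' x0 - f'' x0 (t • u)) (t • u)
            ≤ ‖(f' (x0 + t • u) - f' x0 - f'' x0 (t • u)) (t • u)‖ := le_abs_self _
          _ ≤ ‖f' (x0 + t • u) - f' x0 - f'' x0 (t • u)‖ * ‖t • u‖ :=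
              ContinuousLinearMap.le_opNorm _ _
          _ ≤ (Tbar * ‖t • u‖ ^ 2) * ‖t • u‖ := by
              gcongr
      have happ : (f' (x0 + t • u) - f' x0 - f'' x0 (t • u)) (t • u)
          = f' (x0 + t • u) (t • u) - f' x0 (t • u) - t ^ 2 * (f'' x0 u u) := by
        simp [ContinuousLinearMap.sub_apply, map_smul, ContinuousLinearMap.smul_apply,
          smul_eq_mul]
        ring
      have hnrm : ‖t • u‖ = t * ‖u‖ := by
        rw [norm_smul, Real.norm_eq_abs, abs_of_pos ht]
      rw [happ, hnrm] at h3
      rw [hnrm] at h1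
      have hdiv : t ^ 2 * (lam * ‖u‖ ^ 2) ≤ t ^ 2 * (f'' x0 u u + Tbar * ‖u‖ ^ 3 * t) := by
        nlinarith [h1, h3]
      exact le_of_mul_le_mul_left hdiv (by positivity)
    refine le_of_forall_pos_le_add ?_
    intro ε hε
    have hDpos : (0:ℝ) < Tbar * ‖u‖ ^ 3 + 1 := by positivity
    have ht : 0 < ε / (Tbar * ‖u‖ ^ 3 + 1) := div_pos hε hDpos
    have hk := key _ ht
    have hle : Tbar * ‖u‖ ^ 3 * (ε / (Tbar * ‖u‖ ^ 3 + 1)) ≤ ε := by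
      rw [mul_div_assoc', div_le_iff₀ hDpos]
      nlinarith [hε.le, mul_nonneg hT0 (pow_nonneg (norm_nonneg u) 3)]
    linarith
  have hHlow : ∀ u : EuclideanSpace ℝ (Fin n), lam * ‖u‖ ≤ ‖f'' x0 u‖ := by
    intro u
    rcases eq_or_ne u 0 with rfl | hu
    · simp
    have h1 := hcoerc u
    have h2 : f'' x0 u u ≤ ‖f'' x0 u‖ * ‖u‖ := by
      calc f'' x0 u u ≤ ‖f'' x0 u u‖ := le_abs_self _
        _ ≤ ‖f'' x0 u‖ * ‖u‖ := ContinuousLinearMap.le_opNorm _ _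
    have hupos : 0 < ‖u‖ := norm_pos_iff.mpr hu
    exact le_of_mul_le_mul_right (by nlinarith) hupos
  -- the endomorphism HL
  set HL : EuclideanSpace ℝ (Fin n) →L[ℝ] EuclideanSpace ℝ (Fin n) :=
    (dualCLM (EuclideanSpace ℝ (Fin n))).comp (f'' x0) with hHL
  have hHLval : ∀ w, HL w = dualCLM (EuclideanSpace ℝ (Fin n)) (f'' x0 w) := fun w => rfl
  have hHLlow : ∀ u, lam * ‖u‖ ≤ ‖HL u‖ := by
    intro u
    rw [hHLval, dualCLM_norm]
    exact hHlow u
  have hinj : Function.Injective HL := by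
    intro a b hab
    have h0 : HL (a - b) = 0 := by rw [map_sub, hab, sub_self]
    have := hHLlow (a - b)
    rw [h0, norm_zero] at this
    have : ‖a - b‖ ≤ 0 := by nlinarith
    have : a - b = 0 := by
      rw [← norm_le_zero_iff]; exact this
    exact sub_eq_zero.mp this
  have hsurj : Function.Surjective HL :=
    (LinearMap.injective_iff_surjective
      (f := (HL : EuclideanSpace ℝ (Fin n) →ₗ[ℝ] EuclideanSpace ℝ (Fin n)))).mp hinj
  obtain ⟨v, hv⟩ := hsurj (-gradient C x0)
  have hHder : HasFDerivAt (gradient E) HL x0 := by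
    have h1 : HasFDerivAt f' (f'' x0) x0 := (hf'diff x0).hasFDerivAt
    have h2 := (dualCLM (EuclideanSpace ℝ (Fin n))).hasFDerivAt.comp x0 h1
    have heq : gradient E = fun z => dualCLM (EuclideanSpace ℝ (Fin n)) (f' z) :=
      funext fun z => gradient_eq_dualCLM E z
    rw [heq]
    exact h2
  have hHeq : fderiv ℝ (gradient E) x0 = HL := hHder.fderiv
  have hvH : f'' x0 v = -(g' x0) := by
    apply dualCLM_injective
    rw [map_neg, ← hHLval, hv, gradient_eq_dualCLM]
  -- the quadratic bound
  have hbound : ∀ β : ℝ, ‖xβ β - x0 - β • v‖ ≤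
      ((Bbar * G * lam + Tbar * G ^ 2) / lam ^ 3) * β ^ 2 := by
    intro β
    set y := xβ β with hy
    set u : EuclideanSpace ℝ (Fin n) := y - x0 with hu
    have hnu : lam * ‖u‖ ≤ G * |β| := by
      rcases eq_or_lt_of_le (norm_nonneg u) with h0 | hupos
      · rw [← h0, mul_zero]; positivity
      have h1 := hmono y x0
      have e : f' y (y - x0) - f' x0 (y - x0) = -(β * g' y u) := by
        rw [hcrit β, hcrit0]
        simp [ContinuousLinearMap.neg_apply, ContinuousLinearMap.smul_apply, smul_eq_mul, hu]
        exact Or.inl rfl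
      rw [e] at h1
      rw [← hu] at h1
      have h2 : -(β * g' y u) ≤ |β| * (G * ‖u‖) := by
        calc -(β * g' y u) ≤ |β * g' y u| := neg_le_abs _
          _ = |β| * |g' y u| := abs_mul _ _
          _ ≤ |β| * (G * ‖u‖) := by
              gcongr
              calc |g' y u| ≤ ‖g' y‖ * ‖u‖ := by
                    simpa using ContinuousLinearMap.le_opNorm (g' y) u
                _ ≤ G * ‖u‖ := by gcongr; exact hg'b y
      exact le_of_mul_le_mul_right (by nlinarith) hupos
    have hR := hTaylor x0 y
    rw [← hu] at hR
    have hkey : ‖f'' x0 (u - β • v)‖ ≤ |β| * (Bbar * ‖u‖) + Tbar * ‖u‖ ^ 2 := by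
      have e : f'' x0 (u - β • v) = (β • (g' x0 - g' y)) - (f' y - f' x0 - f'' x0 u) := by
        rw [map_sub, map_smul, hvH, hcrit β, hcrit0]
        rw [← hy]
        module
      rw [e]
      calc ‖(β • (g' x0 - g' y)) - (f' y - f' x0 - f'' x0 u)‖
          ≤ ‖β • (g' x0 - g' y)‖ + ‖f' y - f' x0 - f'' x0 u‖ := norm_sub_le _ _
        _ ≤ |β| * (Bbar * ‖u‖) + Tbar * ‖u‖ ^ 2 := by
            have hs : ‖β • (g' x0 - g' y)‖ = |β| * ‖g' x0 - g' y‖ := by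
              rw [norm_smul β (g' x0 - g' y), Real.norm_eq_abs]
            have h4 : ‖g' x0 - g' y‖ ≤ Bbar * ‖u‖ := by
              calc ‖g' x0 - g' y‖ ≤ Bbar * ‖x0 - y‖ := hg'lip x0 y
                _ = Bbar * ‖u‖ := by rw [norm_sub_rev, ← hu]
            rw [hs]
            exact add_le_add (mul_le_mul_of_nonneg_left h4 (abs_nonneg β)) hR
    have hdlow : lam * ‖u - β • v‖ ≤ ‖f'' x0 (u - β • v)‖ := hHlow _
    have hA : lam * ‖u - β • v‖ ≤ |β| * (Bbar * ‖u‖) + Tbar * ‖u‖ ^ 2 :=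
      le_trans hdlow hkey
    have harith := stmt2_arith hlam hT0 hB0 hG0
    have habs : |β| * |β| = β ^ 2 := by rw [← abs_mul, ← pow_two, abs_of_nonneg (sq_nonneg β)]
    rw [div_mul_eq_mul_div, le_div_iff₀ (by positivity : (0:ℝ) < lam ^ 3)]
    have := harith ‖u - β • v‖ ‖u‖ |β| (norm_nonneg _) (norm_nonneg _) (abs_nonneg _) hA hnu
    rwa [habs] at this
  refine ⟨v, ?_, ?_, ?_⟩
  · rw [hHeq]
    exact hv
  · rw [hasDerivAt_iff_isLittleO]
    simp only [sub_zero]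
    have hO : (fun β => xβ β - x0 - β • v) =O[nhds 0] (fun β : ℝ => β ^ 2) := by
      refine Asymptotics.IsBigO.of_bound ((Bbar * G * lam + Tbar * G ^ 2) / lam ^ 3)
        (Filter.Eventually.of_forall fun β => ?_)
      have := hbound β
      simpa [Real.norm_eq_abs, abs_of_nonneg (sq_nonneg β)] using this
    have ho : (fun β : ℝ => β ^ 2) =o[nhds 0] (fun β : ℝ => β) := by
      have h1 : (fun β : ℝ => β) =o[nhds 0] (fun _ : ℝ => (1:ℝ)) :=
        (Asymptotics.isLittleO_one_iff ℝ).mpr Filter.tendsto_id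
      have h2 := h1.mul_isBigO (Asymptotics.isBigO_refl (fun β : ℝ => β) (nhds 0))
      simpa [pow_two] using h2
    exact hO.trans_isLittleO ho
  · exact ⟨fun l t g b => (b * g * l + t * g ^ 2) / l ^ 3, hbound⟩
end

section
/- Under the hypotheses of the second-order expansion of the nudged equilibrium (E strongly convex and C⁴, C a C³ nudge with bounded derivatives, x_β the minimizer of E + β·C), the symmetric EqProp estimator g_β^sym(θ) = (1/(2β))·[∇_θE(θ, x_β) − ∇_θE(θ, x_{−β})] satisfies ‖g_β^sym(θ) − ∇_θ(C ∘ x₀)(θ)‖ ≤ K₂·β² for small β > 0 and some constant K₂, i.e. the symmetric estimator has bias of order β² rather than β. -/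
open Set ContinuousLinearMap

variable {p n : ℕ}
local notation "P'" => EuclideanSpace ℝ (Fin p)
local notation "N'" => EuclideanSpace ℝ (Fin n)

/-- first-order condition at the minimizer -/
lemma foc_aux (E : P' → N' → ℝ) (C : N' → ℝ)
    (hE : ContDiff ℝ 4 (fun q : P' × N' => E q.1 q.2))
    (hC : ContDiff ℝ 3 C)
    (xs : ℝ → P' → N')
    (hmin : ∀ β θ, IsMinOn (fun x => E θ x + β * C x) Set.univ (xs β θ))
    (β : ℝ) (t : P') :
    (fderiv ℝ (fun q : P' × N' => E q.1 q.2) (t, xs β t)).comp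
        ((0 : N' →L[ℝ] P').prod (ContinuousLinearMap.id ℝ N'))
      + β • fderiv ℝ C (xs β t) = 0 := by
  set x₀ := xs β t
  have hEud : HasFDerivAt (fun q : P' × N' => E q.1 q.2)
      (fderiv ℝ (fun q : P' × N' => E q.1 q.2) (t, x₀)) (t, x₀) :=
    (hE.differentiable (by norm_num) _).hasFDerivAt
  have hpath : HasFDerivAt (fun x : N' => ((t, x) : P' × N'))
      ((0 : N' →L[ℝ] P').prod (ContinuousLinearMap.id ℝ N')) x₀ :=
    (hasFDerivAt_const t x₀).prodMk (hasFDerivAt_id x₀)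
  have hdE : HasFDerivAt (fun x : N' => E t x)
      ((fderiv ℝ (fun q : P' × N' => E q.1 q.2) (t, x₀)).comp
        ((0 : N' →L[ℝ] P').prod (ContinuousLinearMap.id ℝ N'))) x₀ :=
    hEud.comp x₀ hpath
  have hdC : HasFDerivAt (fun x : N' => β * C x) (β • fderiv ℝ C x₀) x₀ :=
    ((hC.differentiable (by norm_num) x₀).hasFDerivAt).const_mul β
  exact ((hmin β t).isLocalMin (by simp [Filter.univ_mem])).hasFDerivAt_eq_zero (hdE.add hdC)


noncomputable def fAux (E : P' → N' → ℝ) (C : N' → ℝ) (xs : ℝ → P' → N') : ℝ × P' → ℝ :=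
  fun q => E q.2 (xs q.1 q.2) + q.1 * C (xs q.1 q.2)

lemma fAux_contDiff (E : P' → N' → ℝ) (C : N' → ℝ)
    (hE : ContDiff ℝ 4 (fun q : P' × N' => E q.1 q.2))
    (hC : ContDiff ℝ 3 C)
    (xs : ℝ → P' → N')
    (hsmooth : ContDiff ℝ 3 (fun q : ℝ × P' => xs q.1 q.2)) :
    ContDiff ℝ 3 (fAux E C xs) := by
  have h1 : ContDiff ℝ 3 (fun q : ℝ × P' => ((q.2, xs q.1 q.2) : P' × N')) :=
    (contDiff_snd).prodMk hsmooth
  exact ((hE.of_le (by norm_num)).comp h1).add (contDiff_fst.mul (hC.comp hsmooth))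



/-- Lemma A: the θ-partial of fAux is the θ-partial of E at the equilibrium (envelope). -/
lemma envelope_theta (E : P' → N' → ℝ) (C : N' → ℝ)
    (hE : ContDiff ℝ 4 (fun q : P' × N' => E q.1 q.2))
    (hC : ContDiff ℝ 3 C)
    (xs : ℝ → P' → N')
    (hmin : ∀ β θ, IsMinOn (fun x => E θ x + β * C x) Set.univ (xs β θ))
    (hsmooth : ContDiff ℝ 3 (fun q : ℝ × P' => xs q.1 q.2))
    (hfoc : ∀ (β : ℝ) (t : P'),
      (fderiv ℝ (fun q : P' × N' => E q.1 q.2) (t, xs β t)).comp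
          ((0 : N' →L[ℝ] P').prod (ContinuousLinearMap.id ℝ N'))
        + β • fderiv ℝ C (xs β t) = 0)
    (hf : ContDiff ℝ 3 (fAux E C xs))
    (β : ℝ) (t : P') :
    (fderiv ℝ (fAux E C xs) (β, t)).comp
        ((0 : P' →L[ℝ] ℝ).prod (ContinuousLinearMap.id ℝ P'))
      = (fderiv ℝ (fun q : P' × N' => E q.1 q.2) (t, xs β t)).comp
          ((ContinuousLinearMap.id ℝ P').prod (0 : P' →L[ℝ] N')) := by
  set x₀ := xs β t with hx₀
  set DE := fderiv ℝ (fun q : P' × N' => E q.1 q.2) (t, x₀) with hDE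
  set Dc := fderiv ℝ C x₀ with hDc
  set inT : P' →L[ℝ] ℝ × P' := (0 : P' →L[ℝ] ℝ).prod (ContinuousLinearMap.id ℝ P') with hinT
  -- derivative of t' ↦ xs β t'
  set LX : P' →L[ℝ] N' := (fderiv ℝ (fun q : ℝ × P' => xs q.1 q.2) (β, t)).comp inT with hLX
  have hpathT : HasFDerivAt (fun t' : P' => ((β, t') : ℝ × P')) inT t :=
    (hasFDerivAt_const β t).prodMk (hasFDerivAt_id t)
  have hXfull : HasFDerivAt (fun q : ℝ × P' => xs q.1 q.2)
      (fderiv ℝ (fun q : ℝ × P' => xs q.1 q.2) (β, t)) (β, t) :=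
    (hsmooth.differentiable (by norm_num) _).hasFDerivAt
  have hXt : HasFDerivAt (fun t' : P' => xs β t') LX t := hXfull.comp t hpathT
  -- side 1: via fAux
  have hffull : HasFDerivAt (fAux E C xs) (fderiv ℝ (fAux E C xs) (β, t)) (β, t) :=
    (hf.differentiable (by norm_num) _).hasFDerivAt
  have hside1 : HasFDerivAt (fun t' : P' => fAux E C xs (β, t'))
      ((fderiv ℝ (fAux E C xs) (β, t)).comp inT) t := hffull.comp t hpathT
  -- side 2: direct
  have hEud : HasFDerivAt (fun q : P' × N' => E q.1 q.2) DE (t, x₀) :=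
    (hE.differentiable (by norm_num) _).hasFDerivAt
  have hψ : HasFDerivAt (fun t' : P' => ((t', xs β t') : P' × N'))
      ((ContinuousLinearMap.id ℝ P').prod LX) t := (hasFDerivAt_id t).prodMk hXt
  have hEpart : HasFDerivAt (fun t' : P' => E t' (xs β t'))
      (DE.comp ((ContinuousLinearMap.id ℝ P').prod LX)) t := by have := hEud.comp t hψ; exact this
  have hCd : HasFDerivAt C Dc x₀ := (hC.differentiable (by norm_num) _).hasFDerivAt
  have hCpart : HasFDerivAt (fun t' : P' => β * C (xs β t')) (β • (Dc.comp LX)) t :=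
    (hCd.comp t hXt).const_mul β
  have hside2 : HasFDerivAt (fun t' : P' => fAux E C xs (β, t'))
      (DE.comp ((ContinuousLinearMap.id ℝ P').prod LX) + β • (Dc.comp LX)) t :=
    hEpart.add hCpart
  have huniq : (fderiv ℝ (fAux E C xs) (β, t)).comp inT
      = DE.comp ((ContinuousLinearMap.id ℝ P').prod LX) + β • (Dc.comp LX) :=
    hside1.unique hside2
  rw [huniq]
  ext v
  have hfoc' := congrArg (fun L => L (LX v)) (hfoc β t)
  simp only [ContinuousLinearMap.add_apply, ContinuousLinearMap.comp_apply,
    ContinuousLinearMap.prod_apply, ContinuousLinearMap.zero_apply,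
    ContinuousLinearMap.id_apply, ContinuousLinearMap.smul_apply,
    ContinuousLinearMap.coe_zero, Pi.zero_apply] at hfoc' ⊢
  have hsplit : ((v, LX v) : P' × N') = (v, 0) + (0, LX v) := by simp
  rw [show DE (v, LX v) = DE ((v, 0) + (0, LX v)) from by rw [← hsplit], map_add]
  have : DE (0, LX v) + β • Dc (LX v) = 0 := by
    simpa using hfoc'
  rw [← hDE, ← hDc] at *
  linarith [this]



lemma envelope_beta (E : P' → N' → ℝ) (C : N' → ℝ)
    (hE : ContDiff ℝ 4 (fun q : P' × N' => E q.1 q.2))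
    (hC : ContDiff ℝ 3 C)
    (xs : ℝ → P' → N')
    (hsmooth : ContDiff ℝ 3 (fun q : ℝ × P' => xs q.1 q.2))
    (hfoc : ∀ (β : ℝ) (t : P'),
      (fderiv ℝ (fun q : P' × N' => E q.1 q.2) (t, xs β t)).comp
          ((0 : N' →L[ℝ] P').prod (ContinuousLinearMap.id ℝ N'))
        + β • fderiv ℝ C (xs β t) = 0)
    (hf : ContDiff ℝ 3 (fAux E C xs))
    (β : ℝ) (t : P') :
    fderiv ℝ (fAux E C xs) (β, t) ((1 : ℝ), (0 : P')) = C (xs β t) := by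
  set x₀ := xs β t with hx₀
  set DE := fderiv ℝ (fun q : P' × N' => E q.1 q.2) (t, x₀) with hDE
  set Dc := fderiv ℝ C x₀ with hDc
  have hpathB : HasDerivAt (fun b : ℝ => ((b, t) : ℝ × P')) ((1 : ℝ), (0 : P')) β :=
    (hasDerivAt_id β).prodMk (hasDerivAt_const β t)
  have hXfull : HasFDerivAt (fun q : ℝ × P' => xs q.1 q.2)
      (fderiv ℝ (fun q : ℝ × P' => xs q.1 q.2) (β, t)) (β, t) :=
    (hsmooth.differentiable (by norm_num) _).hasFDerivAt
  set x' : N' := fderiv ℝ (fun q : ℝ × P' => xs q.1 q.2) (β, t) ((1 : ℝ), (0 : P')) with hx'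
  have hXb : HasDerivAt (fun b : ℝ => xs b t) x' β := by have := hXfull.comp_hasDerivAt β hpathB; exact this
  -- side 1
  have hffull : HasFDerivAt (fAux E C xs) (fderiv ℝ (fAux E C xs) (β, t)) (β, t) :=
    (hf.differentiable (by norm_num) _).hasFDerivAt
  have hside1 : HasDerivAt (fun b : ℝ => fAux E C xs (b, t))
      (fderiv ℝ (fAux E C xs) (β, t) ((1 : ℝ), (0 : P'))) β :=
    by have := hffull.comp_hasDerivAt β hpathB; exact this
  -- side 2
  have hEud : HasFDerivAt (fun q : P' × N' => E q.1 q.2) DE (t, x₀) :=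
    (hE.differentiable (by norm_num) _).hasFDerivAt
  have hψ : HasDerivAt (fun b : ℝ => ((t, xs b t) : P' × N')) (((0 : P'), x') : P' × N') β :=
    (hasDerivAt_const β t).prodMk hXb
  have hEpart : HasDerivAt (fun b : ℝ => E t (xs b t)) (DE ((0 : P'), x')) β :=
    by have := hEud.comp_hasDerivAt β hψ; exact this
  have hCd : HasFDerivAt C Dc x₀ := (hC.differentiable (by norm_num) _).hasFDerivAt
  have hCc : HasDerivAt (fun b : ℝ => C (xs b t)) (Dc x') β := hCd.comp_hasDerivAt β hXb
  have hmul : HasDerivAt (fun b : ℝ => b * C (xs b t)) (1 * C (xs β t) + β * Dc x') β :=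
    (hasDerivAt_id β).mul hCc
  have hside2 : HasDerivAt (fun b : ℝ => fAux E C xs (b, t))
      (DE ((0 : P'), x') + (1 * C (xs β t) + β * Dc x')) β := hEpart.add hmul
  have huniq := hside1.unique hside2
  rw [huniq]
  have hfoc' := congrArg (fun L => L x') (hfoc β t)
  simp only [ContinuousLinearMap.add_apply, ContinuousLinearMap.comp_apply,
    ContinuousLinearMap.prod_apply, ContinuousLinearMap.zero_apply,
    ContinuousLinearMap.id_apply, ContinuousLinearMap.smul_apply,
    ContinuousLinearMap.coe_zero, Pi.zero_apply, smul_eq_mul] at hfoc'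
  rw [← hDE, ← hDc] at *
  have h0 : DE ((0 : P'), x') + β * Dc x' = 0 := by simpa using hfoc'
  linarith [h0]


noncomputable def PhiAux (E : P' → N' → ℝ) (xs : ℝ → P' → N') (θ : P') : ℝ → (P' →L[ℝ] ℝ) :=
  fun β => (fderiv ℝ (fun q : P' × N' => E q.1 q.2) (θ, xs β θ)).comp
    ((ContinuousLinearMap.id ℝ P').prod (0 : P' →L[ℝ] N'))

lemma PhiAux_contDiff (E : P' → N' → ℝ) (xs : ℝ → P' → N') (θ : P')
    (hE : ContDiff ℝ 4 (fun q : P' × N' => E q.1 q.2))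
    (hsmooth : ContDiff ℝ 3 (fun q : ℝ × P' => xs q.1 q.2)) :
    ContDiff ℝ 3 (PhiAux E xs θ) := by
  have h1 : ContDiff ℝ 3 (fderiv ℝ (fun q : P' × N' => E q.1 q.2)) :=
    hE.fderiv_right (by norm_num)
  have h2 : ContDiff ℝ 3 (fun β : ℝ => ((θ, xs β θ) : P' × N')) :=
    contDiff_const.prodMk (hsmooth.comp (contDiff_id.prodMk contDiff_const))
  have h3 : ContDiff ℝ 3 (fun β : ℝ => fderiv ℝ (fun q : P' × N' => E q.1 q.2) (θ, xs β θ)) :=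
    h1.comp h2
  exact (((ContinuousLinearMap.compL ℝ P' (P' × N') ℝ).flip
    ((ContinuousLinearMap.id ℝ P').prod (0 : P' →L[ℝ] N'))).contDiff.comp h3 :
    ContDiff ℝ 3 fun β : ℝ =>
      ((ContinuousLinearMap.compL ℝ P' (P' × N') ℝ).flip
        ((ContinuousLinearMap.id ℝ P').prod (0 : P' →L[ℝ] N')))
        (fderiv ℝ (fun q : P' × N' => E q.1 q.2) (θ, xs β θ)))




lemma key_deriv (E : P' → N' → ℝ) (C : N' → ℝ) (xs : ℝ → P' → N') (θ : P')
    (hf : ContDiff ℝ 3 (fAux E C xs))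
    (hA : ∀ β : ℝ, (fderiv ℝ (fAux E C xs) (β, θ)).comp
        ((0 : P' →L[ℝ] ℝ).prod (ContinuousLinearMap.id ℝ P')) = PhiAux E xs θ β)
    (hB : ∀ t : P', fderiv ℝ (fAux E C xs) ((0 : ℝ), t) ((1 : ℝ), (0 : P')) = C (xs 0 t)) :
    deriv (PhiAux E xs θ) 0 = fderiv ℝ (fun t => C (xs 0 t)) θ := by
  set F := fAux E C xs with hF
  set inT : P' →L[ℝ] ℝ × P' := (0 : P' →L[ℝ] ℝ).prod (ContinuousLinearMap.id ℝ P') with hinT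
  set D2 := fderiv ℝ (fderiv ℝ F) ((0 : ℝ), θ) with hD2def
  have hf2 : ContDiff ℝ 2 (fderiv ℝ F) := hf.fderiv_right (by norm_num)
  have hD2 : HasFDerivAt (fderiv ℝ F) D2 ((0 : ℝ), θ) :=
    (hf2.differentiable (by norm_num) _).hasFDerivAt
  have hsymm : ∀ v w, D2 v w = D2 w v := hf.contDiffAt.isSymmSndFDerivAt (by norm_num)
  set e₁ : ℝ × P' := ((1 : ℝ), (0 : P')) with he₁
  -- Side 1 : deriv of PhiAux at 0
  have hpath0 : HasDerivAt (fun β : ℝ => ((β, θ) : ℝ × P')) e₁ 0 :=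
    (hasDerivAt_id (0:ℝ)).prodMk (hasDerivAt_const 0 θ)
  have hcomp : HasDerivAt (fun β : ℝ => fderiv ℝ F (β, θ)) (D2 e₁) 0 :=
    hD2.comp_hasDerivAt 0 hpath0
  have hΦd : HasDerivAt (fun β : ℝ => (fderiv ℝ F (β, θ)).comp inT) ((D2 e₁).comp inT) 0 :=
    ((ContinuousLinearMap.compL ℝ P' (ℝ × P') ℝ).flip inT).hasFDerivAt.comp_hasDerivAt 0 hcomp
  have hΦeq : (fun β : ℝ => (fderiv ℝ F (β, θ)).comp inT) = PhiAux E xs θ := funext hA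
  rw [hΦeq] at hΦd
  rw [hΦd.deriv]
  -- Side 2
  have hpathT : HasFDerivAt (fun t : P' => (((0 : ℝ), t) : ℝ × P')) inT θ :=
    (hasFDerivAt_const (0 : ℝ) θ).prodMk (hasFDerivAt_id θ)
  have hcomp2 : HasFDerivAt (fun t : P' => fderiv ℝ F ((0 : ℝ), t)) (D2.comp inT) θ :=
    hD2.comp θ hpathT
  have hev : HasFDerivAt (fun t : P' => fderiv ℝ F ((0 : ℝ), t) e₁)
      ((ContinuousLinearMap.apply ℝ ℝ e₁).comp (D2.comp inT)) θ :=
    (ContinuousLinearMap.apply ℝ ℝ e₁).hasFDerivAt.comp θ hcomp2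
  have hCeq : (fun t : P' => C (xs 0 t)) = fun t : P' => fderiv ℝ F ((0 : ℝ), t) e₁ :=
    funext fun t => (hB t).symm
  rw [hCeq, hev.fderiv]
  ext v
  simp only [ContinuousLinearMap.comp_apply, ContinuousLinearMap.prod_apply,
    ContinuousLinearMap.zero_apply, ContinuousLinearMap.id_apply,
    ContinuousLinearMap.apply_apply]
  exact hsymm e₁ ((0 : ℝ), v)


lemma central_diff_bound {V : Type*} [NormedAddCommGroup V] [NormedSpace ℝ V]
    (Φ : ℝ → V) (hΦ : ContDiff ℝ 3 Φ) :
    ∃ M : ℝ, ∀ β ∈ Set.Ioo (0:ℝ) 1,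
      ‖(2 * β)⁻¹ • (Φ β - Φ (-β)) - deriv Φ 0‖ ≤ M * β ^ 2 := by
  set Φ1 := deriv Φ with hΦ1def
  set Φ2 := deriv Φ1 with hΦ2def
  set Φ3 := deriv Φ2 with hΦ3def
  have hΦ' : ContDiff ℝ ((2 : WithTop ℕ∞) + 1) Φ := by
    have h32 : ((2 : WithTop ℕ∞) + 1) = 3 := by norm_num
    rw [h32]; exact hΦ
  have hΦ1 : ContDiff ℝ 2 Φ1 := (contDiff_succ_iff_deriv.mp hΦ').2.2
  have hΦ1' : ContDiff ℝ ((1 : WithTop ℕ∞) + 1) Φ1 := by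
    have h21 : ((1 : WithTop ℕ∞) + 1) = 2 := by norm_num
    rw [h21]; exact hΦ1
  have hΦ2 : ContDiff ℝ 1 Φ2 := (contDiff_succ_iff_deriv.mp hΦ1').2.2
  have hd0 : ∀ s : ℝ, HasDerivAt Φ (Φ1 s) s := fun s =>
    ((hΦ.differentiable (by norm_num)) s).hasDerivAt
  have hd1 : ∀ s : ℝ, HasDerivAt Φ1 (Φ2 s) s := fun s =>
    ((hΦ1.differentiable (by norm_num)) s).hasDerivAt
  have hd2 : ∀ s : ℝ, HasDerivAt Φ2 (Φ3 s) s := fun s =>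
    ((hΦ2.differentiable (by norm_num)) s).hasDerivAt
  have hc3 : Continuous Φ3 := hΦ2.continuous_deriv le_rfl
  obtain ⟨M, hM⟩ := (isCompact_Icc (a := (-1:ℝ)) (b := 1)).exists_bound_of_continuousOn
    hc3.continuousOn
  have hM0 : 0 ≤ M := le_trans (norm_nonneg _) (hM 0 (by norm_num))
  set h0f : ℝ → V := fun s => Φ s - Φ (-s) - (2 * s) • Φ1 0 with hh0
  set h1f : ℝ → V := fun s => Φ1 s + Φ1 (-s) - (2 : ℝ) • Φ1 0 with hh1
  set h2f : ℝ → V := fun s => Φ2 s - Φ2 (-s) with hh2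
  set h3f : ℝ → V := fun s => Φ3 s + Φ3 (-s) with hh3
  have hneg : ∀ s : ℝ, HasDerivAt (fun u : ℝ => -u) (-1) s := fun s => (hasDerivAt_id s).neg
  have dh0 : ∀ s : ℝ, HasDerivAt h0f (h1f s) s := by
    intro s
    have c1 : HasDerivAt (fun u : ℝ => Φ (-u)) ((-1 : ℝ) • Φ1 (-s)) s :=
      (hd0 (-s)).scomp s (hneg s)
    have c2 : HasDerivAt (fun u : ℝ => (2 * u) • Φ1 0) ((2 : ℝ) • Φ1 0) s := by
      have h' : HasDerivAt (fun u : ℝ => 2 * u) 2 s := by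
        simpa using (hasDerivAt_id s).const_mul (2:ℝ)
      simpa using h'.smul_const (Φ1 0)
    have htot := ((hd0 s).sub c1).sub c2
    convert htot using 1
    · rfl
    simp only [hh1]
    module
  have dh1 : ∀ s : ℝ, HasDerivAt h1f (h2f s) s := by
    intro s
    have c1 : HasDerivAt (fun u : ℝ => Φ1 (-u)) ((-1 : ℝ) • Φ2 (-s)) s :=
      (hd1 (-s)).scomp s (hneg s)
    have htot := ((hd1 s).add c1).sub (hasDerivAt_const s ((2:ℝ) • Φ1 0))
    convert htot using 1
    · rfl
    simp only [hh2]
    module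
  have dh2 : ∀ s : ℝ, HasDerivAt h2f (h3f s) s := by
    intro s
    have c1 : HasDerivAt (fun u : ℝ => Φ2 (-u)) ((-1 : ℝ) • Φ3 (-s)) s :=
      (hd2 (-s)).scomp s (hneg s)
    have htot := (hd2 s).sub c1
    convert htot using 1
    · rfl
    simp only [hh3]
    module
  refine ⟨M, ?_⟩
  rintro β ⟨hβ0, hβ1⟩
  have hβ0' : (0:ℝ) ≤ β := le_of_lt hβ0
  have b3 : ∀ s ∈ Icc (0:ℝ) β, ‖h3f s‖ ≤ 2 * M := by
    intro s hs
    have hs1 : s ∈ Icc (-1:ℝ) 1 := ⟨by linarith [hs.1], by linarith [hs.2, hβ1.le]⟩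
    have hs2 : -s ∈ Icc (-1:ℝ) 1 := ⟨by linarith [hs.2, hβ1.le], by linarith [hs.1]⟩
    calc ‖Φ3 s + Φ3 (-s)‖ ≤ ‖Φ3 s‖ + ‖Φ3 (-s)‖ := norm_add_le _ _
      _ ≤ M + M := add_le_add (hM s hs1) (hM (-s) hs2)
      _ = 2 * M := by ring
  have b2 : ∀ s ∈ Icc (0:ℝ) β, ‖h2f s‖ ≤ 2 * M * β := by
    intro s hs
    have hmv := norm_image_sub_le_of_norm_deriv_le_segment'
      (f := h2f) (f' := h3f) (C := 2 * M)
      (fun x hx => (dh2 x).hasDerivWithinAt) (fun x hx => b3 x (Set.Ico_subset_Icc_self hx)) s hs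
    have h20 : h2f 0 = 0 := by simp [hh2]
    rw [h20] at hmv
    rw [sub_zero, sub_zero] at hmv
    calc ‖h2f s‖ ≤ 2 * M * s := hmv
      _ ≤ 2 * M * β := mul_le_mul_of_nonneg_left hs.2 (by linarith : (0:ℝ) ≤ 2 * M)
  have b1 : ∀ s ∈ Icc (0:ℝ) β, ‖h1f s‖ ≤ 2 * M * β * β := by
    intro s hs
    have hmv := norm_image_sub_le_of_norm_deriv_le_segment'
      (f := h1f) (f' := h2f) (C := 2 * M * β)
      (fun x hx => (dh1 x).hasDerivWithinAt) (fun x hx => b2 x (Set.Ico_subset_Icc_self hx)) s hs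
    have h10 : h1f 0 = 0 := by simp [hh1, two_smul]
    rw [h10] at hmv
    rw [sub_zero, sub_zero] at hmv
    calc ‖h1f s‖ ≤ 2 * M * β * s := hmv
      _ ≤ 2 * M * β * β := mul_le_mul_of_nonneg_left hs.2 (mul_nonneg (by linarith : (0:ℝ) ≤ 2 * M) hβ0')
  have b0 : ‖h0f β‖ ≤ 2 * M * β * β * β := by
    have hmv := norm_image_sub_le_of_norm_deriv_le_segment'
      (f := h0f) (f' := h1f) (C := 2 * M * β * β)
      (fun x hx => (dh0 x).hasDerivWithinAt) (fun x hx => b1 x (Set.Ico_subset_Icc_self hx)) β (Set.mem_Icc.mpr ⟨hβ0', le_rfl⟩)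
    have h00 : h0f 0 = 0 := by simp [hh0]
    rw [h00] at hmv
    rw [sub_zero, sub_zero] at hmv
    exact hmv
  have h2βne : (2 * β) ≠ 0 := by positivity
  have key : (2 * β)⁻¹ • (Φ β - Φ (-β)) - Φ1 0 = (2 * β)⁻¹ • h0f β := by
    simp only [hh0, smul_sub]
    rw [smul_smul, inv_mul_cancel₀ h2βne, one_smul]
  rw [key]
  rw [norm_smul]
  have hns : ‖(2 * β)⁻¹‖ = (2 * β)⁻¹ := by
    rw [Real.norm_eq_abs, abs_of_pos (by positivity)]
  rw [hns]
  calc (2 * β)⁻¹ * ‖h0f β‖ ≤ (2 * β)⁻¹ * (2 * M * β * β * β) := by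
        apply mul_le_mul_of_nonneg_left b0 (by positivity)
    _ = M * β ^ 2 := by field_simp

/-- Symmetric EqProp has bias of order `β²`: the central-difference estimator
built from the `±β`-nudged equilibria approximates the true gradient
`∇_θ (C ∘ x₀)` to within `K₂ β²`. -/
theorem stmt_3 {p n : ℕ}
    (E : EuclideanSpace ℝ (Fin p) → EuclideanSpace ℝ (Fin n) → ℝ)
    (C : EuclideanSpace ℝ (Fin n) → ℝ)
    (hE : ContDiff ℝ 4 (fun q : EuclideanSpace ℝ (Fin p) × EuclideanSpace ℝ (Fin n) => E q.1 q.2))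
    (hC : ContDiff ℝ 3 C)
    (lam : ℝ) (hlam : 0 < lam)
    (hconv : ∀ θ, StrongConvexOn Set.univ lam (E θ))
    (xs : ℝ → EuclideanSpace ℝ (Fin p) → EuclideanSpace ℝ (Fin n))
    (hmin : ∀ β θ, IsMinOn (fun x => E θ x + β * C x) Set.univ (xs β θ))
    (hsmooth : ContDiff ℝ 3
      (fun q : ℝ × EuclideanSpace ℝ (Fin p) => xs q.1 q.2))
    (θ : EuclideanSpace ℝ (Fin p)) :
    ∃ K₂ βstar : ℝ, 0 < βstar ∧
      ∀ β : ℝ, β ∈ Set.Ioo 0 βstar →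
        ‖(2 * β)⁻¹ • (gradient (fun t => E t (xs β θ)) θ
            - gradient (fun t => E t (xs (-β) θ)) θ)
          - gradient (fun t => C (xs 0 t)) θ‖ ≤ K₂ * β ^ 2 := by
  have hfoc := foc_aux E C hE hC xs hmin
  have hf := fAux_contDiff E C hE hC xs hsmooth
  have hA : ∀ β : ℝ, (fderiv ℝ (fAux E C xs) (β, θ)).comp
      ((0 : (EuclideanSpace ℝ (Fin p)) →L[ℝ] ℝ).prod (ContinuousLinearMap.id ℝ (EuclideanSpace ℝ (Fin p)))) = PhiAux E xs θ β :=
    fun β => envelope_theta E C hE hC xs hmin hsmooth hfoc hf β θ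
  have hB : ∀ t : (EuclideanSpace ℝ (Fin p)), fderiv ℝ (fAux E C xs) ((0 : ℝ), t) ((1 : ℝ), (0 : (EuclideanSpace ℝ (Fin p)))) = C (xs 0 t) :=
    fun t => envelope_beta E C hE hC xs hsmooth hfoc hf 0 t
  have hkey : deriv (PhiAux E xs θ) 0 = fderiv ℝ (fun t => C (xs 0 t)) θ :=
    key_deriv E C xs θ hf hA hB
  have hΦc : ContDiff ℝ 3 (PhiAux E xs θ) := PhiAux_contDiff E xs θ hE hsmooth
  obtain ⟨M, hM⟩ := central_diff_bound (PhiAux E xs θ) hΦc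
  -- identification of the gradient integrand with PhiAux
  have hgr : ∀ b : ℝ, fderiv ℝ (fun t => E t (xs b θ)) θ = PhiAux E xs θ b := by
    intro b
    have hEud : HasFDerivAt (fun q : (EuclideanSpace ℝ (Fin p)) × (EuclideanSpace ℝ (Fin n)) => E q.1 q.2)
        (fderiv ℝ (fun q : (EuclideanSpace ℝ (Fin p)) × (EuclideanSpace ℝ (Fin n)) => E q.1 q.2) (θ, xs b θ)) (θ, xs b θ) :=
      (hE.differentiable (by norm_num) _).hasFDerivAt
    have hpath : HasFDerivAt (fun t : (EuclideanSpace ℝ (Fin p)) => ((t, xs b θ) : (EuclideanSpace ℝ (Fin p)) × (EuclideanSpace ℝ (Fin n))))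
        ((ContinuousLinearMap.id ℝ (EuclideanSpace ℝ (Fin p))).prod (0 : (EuclideanSpace ℝ (Fin p)) →L[ℝ] (EuclideanSpace ℝ (Fin n)))) θ :=
      (hasFDerivAt_id θ).prodMk (hasFDerivAt_const (xs b θ) θ)
    exact (hEud.comp θ hpath).fderiv
  refine ⟨M, 1, one_pos, ?_⟩
  rintro β ⟨hβ0, hβ1⟩
  have e1 : gradient (fun t => E t (xs β θ)) θ
      = (InnerProductSpace.toDual ℝ (EuclideanSpace ℝ (Fin p))).symm (PhiAux E xs θ β) := by
    rw [show gradient (fun t => E t (xs β θ)) θ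
      = (InnerProductSpace.toDual ℝ (EuclideanSpace ℝ (Fin p))).symm (fderiv ℝ (fun t => E t (xs β θ)) θ) from rfl,
      hgr β]
  have e2 : gradient (fun t => E t (xs (-β) θ)) θ
      = (InnerProductSpace.toDual ℝ (EuclideanSpace ℝ (Fin p))).symm (PhiAux E xs θ (-β)) := by
    rw [show gradient (fun t => E t (xs (-β) θ)) θ
      = (InnerProductSpace.toDual ℝ (EuclideanSpace ℝ (Fin p))).symm (fderiv ℝ (fun t => E t (xs (-β) θ)) θ) from rfl,
      hgr (-β)]
  have e3 : gradient (fun t => C (xs 0 t)) θ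
      = (InnerProductSpace.toDual ℝ (EuclideanSpace ℝ (Fin p))).symm (deriv (PhiAux E xs θ) 0) := by
    rw [show gradient (fun t => C (xs 0 t)) θ
      = (InnerProductSpace.toDual ℝ (EuclideanSpace ℝ (Fin p))).symm (fderiv ℝ (fun t => C (xs 0 t)) θ) from rfl,
      hkey]
  rw [e1, e2, e3]
  have e4 : (2 * β)⁻¹ • ((InnerProductSpace.toDual ℝ (EuclideanSpace ℝ (Fin p))).symm (PhiAux E xs θ β)
        - (InnerProductSpace.toDual ℝ (EuclideanSpace ℝ (Fin p))).symm (PhiAux E xs θ (-β)))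
      - (InnerProductSpace.toDual ℝ (EuclideanSpace ℝ (Fin p))).symm (deriv (PhiAux E xs θ) 0)
      = (InnerProductSpace.toDual ℝ (EuclideanSpace ℝ (Fin p))).symm
          ((2 * β)⁻¹ • (PhiAux E xs θ β - PhiAux E xs θ (-β)) - deriv (PhiAux E xs θ) 0) := by
    simp [map_sub, map_smul]
  rw [e4, LinearIsometryEquiv.norm_map]
  exact hM β ⟨hβ0, hβ1⟩
end

section
/- Let H ⪰ λ⋆ I be symmetric positive definite, C(z) = (1/2)‖z − d‖² a quadratic loss on the output block with projector P (P² = P = Pᵀ), and E_θ quadratic in x with ∇_θ∇ₓE = M constant. Then the one-sided EqProp estimator at any β ∈ (0, λ⋆/‖P‖) for this setup equals g_β = −Mᵀ(H + βP)⁻¹ P (x₀,O-part minus d extended by zero), and ‖g_β − g₀‖ ≤ (β/λ⋆²)·‖M‖·‖b‖·(1 − β/λ⋆)⁻¹, where b = ∇C at the free equilibrium extended by zeros and g₀ = −MᵀH⁻¹b is the exact gradient. -/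
open ContinuousLinearMap

set_option maxHeartbeats 1000000

/-- Closed-form finite-`β` bias for a quadratic energy with quadratic output
nudge: the one-sided EqProp estimator is a resolvent expression
`−M† (H + βP)⁻¹ b`, and its deviation from the exact gradient `−M† H⁻¹ b` is
bounded by `(β/λ⋆²) ‖M‖ ‖b‖ (1 − β/λ⋆)⁻¹`. -/
theorem stmt_16 {p n : ℕ}
    (H P : EuclideanSpace ℝ (Fin n) →L[ℝ] EuclideanSpace ℝ (Fin n))
    (hHsa : IsSelfAdjoint H)
    (lam : ℝ) (hlam : 0 < lam)
    (hcoer : ∀ v, lam * ‖v‖ ^ 2 ≤ inner ℝ v (H v))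
    (hPsa : IsSelfAdjoint P) (hPproj : P.comp P = P)
    (M : EuclideanSpace ℝ (Fin p) →L[ℝ] EuclideanSpace ℝ (Fin n))
    (d : EuclideanSpace ℝ (Fin n)) (hd : P d = d)
    (β : ℝ) (hβ0 : 0 < β) (hβ : β * ‖P‖ < lam)
    (x₀ xβ : EuclideanSpace ℝ (Fin n))
    (hnudge : H xβ + β • (P xβ - d) = H x₀)
    (b : EuclideanSpace ℝ (Fin n)) (hb : b = P x₀ - d)
    (u v₀ : EuclideanSpace ℝ (Fin n))
    (hu : (H + β • P) u = b) (hv₀ : H v₀ = b) :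
    β⁻¹ • ((ContinuousLinearMap.adjoint M) xβ - (ContinuousLinearMap.adjoint M) x₀)
        = -(ContinuousLinearMap.adjoint M) u ∧
    ‖(-(ContinuousLinearMap.adjoint M) u) - (-(ContinuousLinearMap.adjoint M) v₀)‖
        ≤ (β / lam ^ 2) * ‖M‖ * ‖b‖ * (1 - β / lam)⁻¹ := by
  -- P is symmetric: ⟪P x, y⟫ = ⟪x, P y⟫
  have hPsym : ∀ x y : EuclideanSpace ℝ (Fin n),
      (inner ℝ (P x) y : ℝ) = inner ℝ x (P y) := by
    intro x y
    conv_lhs => rw [← hPsa.adjoint_eq]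
    exact ContinuousLinearMap.adjoint_inner_left P y x
  have hPP : ∀ w : EuclideanSpace ℝ (Fin n), P (P w) = P w := by
    intro w
    have := congrArg (fun T : EuclideanSpace ℝ (Fin n) →L[ℝ] _ => T w) hPproj
    simpa using this
  -- ⟪w, P w⟫ = ‖P w‖²
  have hPnn : ∀ w : EuclideanSpace ℝ (Fin n),
      (inner ℝ w (P w) : ℝ) = ‖P w‖ ^ 2 := by
    intro w
    have h1 : P (P w) = P w := hPP w
    calc (inner ℝ w (P w) : ℝ) = inner ℝ w (P (P w)) := by rw [h1]
      _ = inner ℝ (P w) (P w) := by rw [← hPsym]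
      _ = ‖P w‖ ^ 2 := real_inner_self_eq_norm_sq _
  -- coercivity of H + βP
  have hcoer2 : ∀ w : EuclideanSpace ℝ (Fin n),
      lam * ‖w‖ ^ 2 ≤ inner ℝ w ((H + β • P) w) := by
    intro w
    have h1 : ((H + β • P) w) = H w + β • P w := by simp
    rw [h1, inner_add_right, real_inner_smul_right, hPnn]
    nlinarith [hcoer w, sq_nonneg ‖P w‖]
  -- injectivity of H + βP
  have hinj : ∀ w : EuclideanSpace ℝ (Fin n), (H + β • P) w = 0 → w = 0 := by
    intro w hw
    have h1 := hcoer2 w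
    rw [hw, inner_zero_right] at h1
    have : ‖w‖ ^ 2 ≤ 0 := by nlinarith
    have : ‖w‖ = 0 := by nlinarith [sq_nonneg ‖w‖, norm_nonneg w]
    simpa using this
  -- key identity: xβ - x₀ = -(β • u)
  have hA : (H + β • P) (xβ - x₀) = -(β • b) := by
    have h2 : H xβ + β • P xβ = H x₀ + β • d := by
      rw [smul_sub] at hnudge
      rw [← hnudge]; abel
    have h3 : (H + β • P) (xβ - x₀) = (H xβ + β • P xβ) - (H x₀ + β • P x₀) := by
      simp only [ContinuousLinearMap.add_apply, ContinuousLinearMap.smul_apply, map_sub]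
    rw [h3, h2, hb, smul_sub]
    abel
  have hAu : (H + β • P) (β • u) = β • b := by rw [map_smul, hu]
  have hkey : xβ - x₀ = -(β • u) := by
    have h0 : (H + β • P) (xβ - x₀ + β • u) = 0 := by
      rw [map_add, hA, hAu]; abel
    exact eq_neg_of_add_eq_zero_left (hinj _ h0)
  constructor
  · -- first part
    rw [← map_sub, hkey, map_neg, map_smul, smul_neg, smul_smul,
      inv_mul_cancel₀ (ne_of_gt hβ0), one_smul]
  · -- second part
    have hMnorm : ‖ContinuousLinearMap.adjoint M‖ = ‖M‖ :=
      LinearIsometryEquiv.norm_map ContinuousLinearMap.adjoint M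
    -- bound ‖u‖ ≤ ‖b‖ / lam
    have hub : lam * ‖u‖ ≤ ‖b‖ := by
      have h1 := hcoer2 u
      rw [hu] at h1
      have h2 : (inner ℝ u b : ℝ) ≤ ‖u‖ * ‖b‖ := real_inner_le_norm u b
      rcases eq_or_lt_of_le (norm_nonneg u) with h | h
      · rw [← h]; simpa using norm_nonneg b
      · have : lam * ‖u‖ * ‖u‖ ≤ ‖u‖ * ‖b‖ := by nlinarith
        exact le_of_mul_le_mul_right (by linarith [this]) h
    -- H (u - v₀) = -(β • P u)
    have hdiff : H (u - v₀) = -(β • P u) := by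
      have h1 : H u + β • P u = b := by
        have := hu
        simpa using this
      rw [map_sub, hv₀]
      have : H u = b - β • P u := by rw [← h1]; abel
      rw [this]; abel
    -- bound ‖u - v₀‖
    have hdb : lam * ‖u - v₀‖ ≤ β * ‖P‖ * ‖u‖ := by
      have h1 := hcoer u
      have h2 := hcoer (u - v₀)
      rw [hdiff] at h2
      have h3 : (inner ℝ (u - v₀) (-(β • P u)) : ℝ) ≤ ‖u - v₀‖ * (β * (‖P‖ * ‖u‖)) := by
        calc (inner ℝ (u - v₀) (-(β • P u)) : ℝ) ≤ ‖u - v₀‖ * ‖-(β • P u)‖ :=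
              real_inner_le_norm _ _
          _ ≤ ‖u - v₀‖ * (β * (‖P‖ * ‖u‖)) := by
              apply mul_le_mul_of_nonneg_left _ (norm_nonneg _)
              rw [norm_neg, norm_smul, Real.norm_eq_abs, abs_of_pos hβ0]
              exact mul_le_mul_of_nonneg_left (P.le_opNorm u) (le_of_lt hβ0)
      rcases eq_or_lt_of_le (norm_nonneg (u - v₀)) with h | h
      · rw [← h]
        have : (0:ℝ) ≤ β * ‖P‖ * ‖u‖ :=
          mul_nonneg (mul_nonneg hβ0.le (norm_nonneg P)) (norm_nonneg u)
        linarith [this]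
      · have h4 : lam * ‖u - v₀‖ * ‖u - v₀‖ ≤ (β * ‖P‖ * ‖u‖) * ‖u - v₀‖ := by
          nlinarith
        exact le_of_mul_le_mul_right (by linarith [h4]) h
    -- main bound
    have hL : ‖(-(ContinuousLinearMap.adjoint M) u) - (-(ContinuousLinearMap.adjoint M) v₀)‖
        ≤ ‖M‖ * ‖u - v₀‖ := by
      have : (-(ContinuousLinearMap.adjoint M) u) - (-(ContinuousLinearMap.adjoint M) v₀)
          = (ContinuousLinearMap.adjoint M) (v₀ - u) := by
        rw [map_sub]; abel
      rw [this]
      calc ‖(ContinuousLinearMap.adjoint M) (v₀ - u)‖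
          ≤ ‖ContinuousLinearMap.adjoint M‖ * ‖v₀ - u‖ :=
            (ContinuousLinearMap.adjoint M).le_opNorm _
        _ = ‖M‖ * ‖u - v₀‖ := by rw [hMnorm, norm_sub_rev]
    by_cases hP0 : P = 0
    · -- degenerate case: P = 0 forces b = 0 and u = v₀
      have hd0 : d = 0 := by rw [← hd, hP0]; simp
      have hb0 : b = 0 := by rw [hb, hP0, hd0]; simp
      have huv : u = v₀ := by
        have h0 : (H + β • P) (u - v₀) = 0 := by
          rw [map_sub, hu]
          have h5 : (H + β • P) v₀ = H v₀ + β • P v₀ := by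
            simp [ContinuousLinearMap.add_apply]
          rw [h5, hP0, hv₀]
          simp only [ContinuousLinearMap.zero_apply, smul_zero, add_zero, sub_self]
        exact sub_eq_zero.mp (hinj _ h0)
      rw [huv, hb0]
      simp
    · -- P ≠ 0: ‖P‖ = 1
      have hPle : ∀ v : EuclideanSpace ℝ (Fin n), ‖P v‖ ≤ ‖v‖ := by
        intro v
        have h1 : ‖P v‖ ^ 2 = inner ℝ v (P v) := (hPnn v).symm
        have h2 : (inner ℝ v (P v) : ℝ) ≤ ‖v‖ * ‖P v‖ := real_inner_le_norm _ _
        rcases eq_or_lt_of_le (norm_nonneg (P v)) with h | h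
        · rw [← h]; exact norm_nonneg v
        · nlinarith
      have hPnorm_le : ‖P‖ ≤ 1 := P.opNorm_le_bound zero_le_one (by simpa using hPle)
      have hPnorm_ge : 1 ≤ ‖P‖ := by
        obtain ⟨v, hv⟩ : ∃ v, P v ≠ 0 := by
          by_contra h
          push_neg at h
          exact hP0 (ContinuousLinearMap.ext fun v => by simpa using h v)
        have h1 : P (P v) = P v := hPP v
        have h2 : ‖P (P v)‖ ≤ ‖P‖ * ‖P v‖ := P.le_opNorm _
        rw [h1] at h2
        have h3 : 0 < ‖P v‖ := norm_pos_iff.mpr hv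
        calc (1:ℝ) = ‖P v‖ / ‖P v‖ := (div_self (ne_of_gt h3)).symm
          _ ≤ ‖P‖ := by rw [div_le_iff₀ h3]; exact h2
      have hPnorm : ‖P‖ = 1 := le_antisymm hPnorm_le hPnorm_ge
      have hβlam : β < lam := by rw [hPnorm] at hβ; linarith
      -- chain the bounds
      have h1 : lam * lam * ‖u - v₀‖ ≤ β * ‖b‖ := by
        have := hdb
        rw [hPnorm] at this
        nlinarith [norm_nonneg (u - v₀), norm_nonneg u, hub]
      have h2 : ‖u - v₀‖ ≤ β * ‖b‖ / lam ^ 2 := by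
        rw [le_div_iff₀ (by positivity : (0:ℝ) < lam ^ 2)]
        nlinarith
      have hfac : (1:ℝ) ≤ (1 - β / lam)⁻¹ := by
        have h3 : 0 < 1 - β / lam := by
          rw [sub_pos, div_lt_one hlam]; exact hβlam
        rw [le_inv_comm₀ one_pos h3]
        simp only [inv_one]
        have : β / lam > 0 := by positivity
        linarith
      calc ‖(-(ContinuousLinearMap.adjoint M) u) - (-(ContinuousLinearMap.adjoint M) v₀)‖
          ≤ ‖M‖ * ‖u - v₀‖ := hL
        _ ≤ ‖M‖ * (β * ‖b‖ / lam ^ 2) :=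
            mul_le_mul_of_nonneg_left h2 (norm_nonneg M)
        _ = (β / lam ^ 2) * ‖M‖ * ‖b‖ * 1 := by ring
        _ ≤ (β / lam ^ 2) * ‖M‖ * ‖b‖ * (1 - β / lam)⁻¹ := by
            apply mul_le_mul_of_nonneg_left hfac
            positivity
end
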